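/- For the solid torus 𝕋 with ρ' = 1 and 0 < ρ < 1, the Fourier transform of its characteristic function evaluated on the z-axis satisfies χ̂(0,0,u) = 2πρ² ∫₀^{2π} sin²θ · cos(2πρu cos θ) dθ for u ∈ ℝ, and this integral equals (2πρ/u) J₁(2πρu) for u ≠ 0. -/

import Mathlib

open Real MeasureTheory intervalIntegral

def solidTorus1 (ρ : ℝ) : Set (ℝ × ℝ × ℝ) :=
  {p | (1 - Real.sqrt (p.1 ^ 2 + p.2.1 ^ 2)) ^ 2 + p.2.2 ^ 2 ≤ ρ ^ 2}

noncomputable def ftorus (ρ : ℝ) (ξ : ℝ × ℝ × ℝ) : ℂ :=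
  ∫ x : ℝ × ℝ × ℝ, (Set.indicator (solidTorus1 ρ) (fun _ => (1 : ℂ)) x) *
    Complex.exp (-(2 * π * Complex.I) *
      ((x.1 * ξ.1 + x.2.1 * ξ.2.1 + x.2.2 * ξ.2.2 : ℝ) : ℂ))

noncomputable def J1 (z : ℝ) : ℝ := (1 / π) * ∫ θ in (0 : ℝ)..π, Real.cos (θ - z * Real.sin θ)

-- L3
lemma L3 (z : ℝ) : ∫ θ in (0:ℝ)..π, Real.cos (θ - z * Real.sin θ)
    = ∫ θ in (0:ℝ)..π, Real.sin θ * Real.sin (z * Real.sin θ) := by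
  have h1 : ∫ θ in (0:ℝ)..π, Real.cos (θ - z * Real.sin θ)
      = (∫ θ in (0:ℝ)..π, Real.cos θ * Real.cos (z * Real.sin θ))
        + ∫ θ in (0:ℝ)..π, Real.sin θ * Real.sin (z * Real.sin θ) := by
    rw [← intervalIntegral.integral_add]
    · congr 1; ext θ; rw [Real.cos_sub]
    · exact (Continuous.intervalIntegrable (by continuity) _ _)
    · exact (Continuous.intervalIntegrable (by continuity) _ _)
  have h2 : (∫ θ in (0:ℝ)..π, Real.cos θ * Real.cos (z * Real.sin θ)) = 0 := by
    have := intervalIntegral.integral_comp_sub_left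
      (fun θ => Real.cos θ * Real.cos (z * Real.sin θ)) π (a := 0) (b := π)
    simp only [sub_self, sub_zero] at this
    have h3 : (∫ x in (0:ℝ)..π, Real.cos (π - x) * Real.cos (z * Real.sin (π - x)))
        = - ∫ x in (0:ℝ)..π, Real.cos x * Real.cos (z * Real.sin x) := by
      rw [← intervalIntegral.integral_neg]
      congr 1; ext x; rw [Real.cos_pi_sub, Real.sin_pi_sub]; ring
    linarith [this, h3, this.symm.trans h3]
  linarith [h1, h2]


lemma L2a (z : ℝ) : z * ∫ θ in (0:ℝ)..(2*π), Real.sin θ ^ 2 * Real.cos (z * Real.cos θ)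
    = ∫ θ in (0:ℝ)..(2*π), Real.cos θ * Real.sin (z * Real.cos θ) := by
  have key : ∀ θ : ℝ, HasDerivAt (fun θ => Real.sin θ * Real.sin (z * Real.cos θ))
      (Real.cos θ * Real.sin (z * Real.cos θ) - z * (Real.sin θ ^ 2 * Real.cos (z * Real.cos θ))) θ := by
    intro θ
    have h1 : HasDerivAt (fun θ : ℝ => Real.sin (z * Real.cos θ))
        (Real.cos (z * Real.cos θ) * (z * (-Real.sin θ))) θ :=
      (Real.hasDerivAt_sin _).comp θ ((Real.hasDerivAt_cos θ).const_mul z)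
    have := (Real.hasDerivAt_sin θ).mul h1
    exact this.congr_deriv (by ring)
  have i1 : IntervalIntegrable (fun θ => Real.cos θ * Real.sin (z * Real.cos θ)) volume 0 (2*π) :=
    Continuous.intervalIntegrable (by fun_prop) _ _
  have i2 : IntervalIntegrable (fun θ => z * (Real.sin θ ^ 2 * Real.cos (z * Real.cos θ))) volume 0 (2*π) :=
    Continuous.intervalIntegrable (by fun_prop) _ _
  have h0 : (∫ θ in (0:ℝ)..(2*π),
      (Real.cos θ * Real.sin (z * Real.cos θ) - z * (Real.sin θ ^ 2 * Real.cos (z * Real.cos θ))))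
      = 0 := by
    rw [intervalIntegral.integral_eq_sub_of_hasDerivAt (fun θ _ => key θ) (i1.sub i2)]
    simp [Real.sin_two_pi, Real.cos_two_pi]
  rw [intervalIntegral.integral_sub i1 i2, intervalIntegral.integral_const_mul] at h0
  linarith

lemma L2 (z : ℝ) : z * ∫ θ in (0:ℝ)..(2*π), Real.sin θ ^ 2 * Real.cos (z * Real.cos θ)
    = 2 * ∫ θ in (0:ℝ)..π, Real.sin θ * Real.sin (z * Real.sin θ) := by
  rw [L2a]
  set q : ℝ → ℝ := fun θ => Real.cos θ * Real.sin (z * Real.cos θ) with hq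
  have hper : Function.Periodic q (2*π) := by
    intro x; simp [hq, Real.cos_add_two_pi]
  have hshift : (∫ θ in (0:ℝ)..(2*π), q θ) = ∫ θ in (0:ℝ)..(2*π), q (θ + π/2) := by
    rw [intervalIntegral.integral_comp_add_right q (π/2)]
    have := hper.intervalIntegral_add_eq 0 (π/2)
    rw [zero_add] at this
    rw [this]
    congr 1 <;> ring
  have hval : ∀ θ : ℝ, q (θ + π/2) = Real.sin θ * Real.sin (z * Real.sin θ) := by
    intro θ
    have c1 : Real.cos (θ + π/2) = -Real.sin θ := by
      rw [Real.cos_add]; simp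
    simp [hq, c1, mul_neg, Real.sin_neg]
  have hsplit : (∫ θ in (0:ℝ)..(2*π), Real.sin θ * Real.sin (z * Real.sin θ))
      = 2 * ∫ θ in (0:ℝ)..π, Real.sin θ * Real.sin (z * Real.sin θ) := by
    have hadj := intervalIntegral.integral_add_adjacent_intervals
      (μ := volume) (a := (0:ℝ)) (b := π) (c := 2*π)
      (f := fun θ => Real.sin θ * Real.sin (z * Real.sin θ))
      (Continuous.intervalIntegrable (by fun_prop) _ _)
      (Continuous.intervalIntegrable (by fun_prop) _ _)
    have h2 : (∫ θ in π..(2*π), Real.sin θ * Real.sin (z * Real.sin θ))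
        = ∫ θ in (0:ℝ)..π, Real.sin θ * Real.sin (z * Real.sin θ) := by
      have hc := intervalIntegral.integral_comp_add_right
        (fun θ => Real.sin θ * Real.sin (z * Real.sin θ)) π (a := 0) (b := π)
      rw [zero_add, show π + π = 2*π by ring] at hc
      rw [← hc]
      congr 1; ext θ; rw [Real.sin_add_pi, mul_neg, Real.sin_neg]; ring
    linarith
  rw [hshift]; simp_rw [hval]; exact hsplit

lemma torus_meas (ρ : ℝ) : MeasurableSet (solidTorus1 ρ) := by
  have : IsClosed (solidTorus1 ρ) :=
    isClosed_le (by fun_prop) continuous_const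
  exact this.measurableSet

lemma torus_subset (ρ : ℝ) (hρ0 : 0 < ρ) (hρ1 : ρ < 1) :
    solidTorus1 ρ ⊆ Set.Icc ((-2,-2,-2) : ℝ×ℝ×ℝ) ((2,2,2) : ℝ×ℝ×ℝ) := by
  rintro ⟨x, y, z⟩ h
  simp only [solidTorus1, Set.mem_setOf_eq] at h
  have hs : (0:ℝ) ≤ Real.sqrt (x^2+y^2) := Real.sqrt_nonneg _
  have hz2 : z^2 ≤ 1 := by nlinarith [sq_nonneg (1 - Real.sqrt (x^2+y^2))]
  have hr2 : (1 - Real.sqrt (x^2+y^2))^2 ≤ 1 := by nlinarith [sq_nonneg z]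
  have hr : Real.sqrt (x^2+y^2) ≤ 2 := by nlinarith
  have hxy : x^2 + y^2 ≤ 4 := by
    have := Real.sq_sqrt (by positivity : (0:ℝ) ≤ x^2+y^2)
    nlinarith
  have hx : |x| ≤ 2 := by
    rw [abs_le]; constructor <;> nlinarith [sq_nonneg y]
  have hy : |y| ≤ 2 := by
    rw [abs_le]; constructor <;> nlinarith [sq_nonneg x]
  have hz : |z| ≤ 2 := by
    rw [abs_le]; constructor <;> nlinarith
  rw [abs_le] at hx hy hz
  refine ⟨⟨hx.1, hy.1, hz.1⟩, hx.2, hy.2, hz.2⟩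

lemma torus_vol (ρ : ℝ) (hρ0 : 0 < ρ) (hρ1 : ρ < 1) : volume (solidTorus1 ρ) < ⊤ :=
  lt_of_le_of_lt (measure_mono (torus_subset ρ hρ0 hρ1))
    (isCompact_Icc.measure_lt_top)

noncomputable def Ee (u : ℝ) (z : ℝ) : ℂ :=
  Complex.exp (-(2 * ↑π * Complex.I) * ((z * u : ℝ) : ℂ))

lemma Ee_cont (u : ℝ) : Continuous (Ee u) := by
  unfold Ee; fun_prop

lemma Ee_norm (u z : ℝ) : ‖Ee u z‖ = 1 := by
  unfold Ee
  rw [Complex.norm_exp]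
  simp [Complex.mul_re]

lemma F_integrable (ρ : ℝ) (hρ0 : 0 < ρ) (hρ1 : ρ < 1) (u : ℝ) :
    Integrable (fun x : ℝ×ℝ×ℝ =>
      (Set.indicator (solidTorus1 ρ) (fun _ => (1 : ℂ)) x) * Ee u x.2.2) volume := by
  have hg : Integrable (fun x : ℝ×ℝ×ℝ =>
      Set.indicator (solidTorus1 ρ) (fun _ => (1 : ℝ)) x) volume := by
    rw [integrable_indicator_iff (torus_meas ρ)]
    exact integrableOn_const (torus_vol ρ hρ0 hρ1).ne
  have hm : AEStronglyMeasurable (fun x : ℝ×ℝ×ℝ =>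
      (Set.indicator (solidTorus1 ρ) (fun _ => (1 : ℂ)) x) * Ee u x.2.2) volume := by
    apply AEStronglyMeasurable.mul
    · exact ((measurable_const.indicator (torus_meas ρ)).aestronglyMeasurable)
    · exact ((Ee_cont u).comp (continuous_snd.comp continuous_snd)).aestronglyMeasurable
  refine hg.mono' hm ?_
  filter_upwards with x
  rw [norm_mul, Ee_norm, mul_one]
  by_cases h : x ∈ solidTorus1 ρ <;> simp [h]

noncomputable def gg (ρ u : ℝ) (r : ℝ) : ℂ :=
  ∫ z in -(Real.sqrt (ρ^2 - (1-r)^2))..(Real.sqrt (ρ^2 - (1-r)^2)), Ee u z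

lemma inner_integral (ρ : ℝ) (u : ℝ) (a b : ℝ) :
    (∫ z : ℝ, (Set.indicator (solidTorus1 ρ) (fun _ => (1 : ℂ)) (a, b, z)) * Ee u z)
      = gg ρ u (Real.sqrt (a^2 + b^2)) := by
  set r := Real.sqrt (a^2+b^2) with hr
  set c := (1 - r)^2 with hc
  set s := Real.sqrt (ρ^2 - c) with hs
  have hs0 : 0 ≤ s := Real.sqrt_nonneg _
  have hmem : ∀ z : ℝ, ((a, b, z) ∈ solidTorus1 ρ) ↔ c + z^2 ≤ ρ^2 := by
    intro z; rfl
  by_cases hcase : c ≤ ρ^2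
  · have hsq : s^2 = ρ^2 - c := Real.sq_sqrt (by linarith)
    have hset : {z : ℝ | (a, b, z) ∈ solidTorus1 ρ} = Set.Icc (-s) s := by
      ext z
      simp only [Set.mem_setOf_eq, hmem, Set.mem_Icc]
      constructor
      · intro h; constructor <;> nlinarith
      · intro ⟨h1, h2⟩; nlinarith
    have h1 : (fun z : ℝ => (Set.indicator (solidTorus1 ρ) (fun _ => (1 : ℂ)) (a, b, z)) * Ee u z)
        = fun z => Set.indicator (Set.Icc (-s) s) (Ee u) z := by
      ext z
      by_cases h : (a, b, z) ∈ solidTorus1 ρ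
      · have hz : z ∈ Set.Icc (-s) s := by rw [← hset]; exact h
        simp [h, hz]
      · have hz : z ∉ Set.Icc (-s) s := by rw [← hset]; exact h
        simp [h, hz]
    rw [h1, MeasureTheory.integral_indicator measurableSet_Icc]
    unfold gg
    rw [MeasureTheory.integral_Icc_eq_integral_Ioc,
      ← intervalIntegral.integral_of_le (by linarith : -s ≤ s)]
  · have hzero : ∀ z : ℝ, (Set.indicator (solidTorus1 ρ) (fun _ => (1 : ℂ)) (a, b, z)) = 0 := by
      intro z
      have : (a, b, z) ∉ solidTorus1 ρ := by
        rw [hmem]; nlinarith [sq_nonneg z]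
      simp [this]
    simp only [hzero, zero_mul, integral_zero]
    unfold gg
    have h0 : s = 0 := Real.sqrt_eq_zero_of_nonpos (by linarith)
    rw [show Real.sqrt (ρ^2 - (1 - r)^2) = s from rfl, h0]
    simp

lemma gg_cont (ρ u : ℝ) : Continuous (gg ρ u) := by
  have hint : ∀ a b : ℝ, IntervalIntegrable (Ee u) volume a b :=
    fun a b => (Ee_cont u).intervalIntegrable a b
  have hΦ : Continuous (fun x : ℝ => ∫ z in (0:ℝ)..x, Ee u z) :=
    intervalIntegral.continuous_primitive hint 0
  have hgg : ∀ r, gg ρ u r = (∫ z in (0:ℝ)..(Real.sqrt (ρ^2 - (1-r)^2)), Ee u z)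
      - ∫ z in (0:ℝ)..(-(Real.sqrt (ρ^2 - (1-r)^2))), Ee u z := by
    intro r
    unfold gg
    rw [eq_sub_iff_add_eq, add_comm,
      intervalIntegral.integral_add_adjacent_intervals (hint _ _) (hint _ _)]
  have hs : Continuous (fun r : ℝ => Real.sqrt (ρ^2 - (1-r)^2)) := by fun_prop
  simp only [funext hgg]
  exact (hΦ.comp hs).sub (hΦ.comp hs.neg)

lemma gg_zero (ρ u r : ℝ) (h : (1-r)^2 > ρ^2) : gg ρ u r = 0 := by
  unfold gg
  rw [Real.sqrt_eq_zero_of_nonpos (by linarith)]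
  simp

lemma polar_step (ρ : ℝ) (hρ0 : 0 < ρ) (hρ1 : ρ < 1) (u : ℝ) :
    (∫ v : ℝ×ℝ, gg ρ u (Real.sqrt (v.1^2 + v.2^2)))
      = ∫ r in Set.Icc (1-ρ) (1+ρ), (2*π*r) • gg ρ u r := by
  rw [← integral_comp_polarCoord_symm (fun v : ℝ×ℝ => gg ρ u (Real.sqrt (v.1^2 + v.2^2)))]
  have htarget : polarCoord.target = Set.Ioi (0:ℝ) ×ˢ Set.Ioo (-π) π := rfl
  have hstep1 : (∫ p in polarCoord.target,
        p.1 • gg ρ u (Real.sqrt ((polarCoord.symm p).1^2 + (polarCoord.symm p).2^2)))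
      = ∫ p in Set.Ioi (0:ℝ) ×ˢ Set.Ioo (-π) π, p.1 • gg ρ u p.1 := by
    rw [htarget]
    apply setIntegral_congr_fun (measurableSet_Ioi.prod measurableSet_Ioo)
    rintro ⟨r, θ⟩ ⟨hr, -⟩
    have hr' : (0:ℝ) < r := hr
    have hsymm : polarCoord.symm (r, θ) = (r * Real.cos θ, r * Real.sin θ) := rfl
    dsimp only
    rw [hsymm]
    have : (r * Real.cos θ)^2 + (r * Real.sin θ)^2 = r^2 := by
      have := Real.sin_sq_add_cos_sq θ; nlinarith
    simp only [this]
    rw [Real.sqrt_sq hr'.le]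
  rw [hstep1]
  have hsub : Set.Icc (1-ρ) (1+ρ) ×ˢ Set.Ioo (-π) π ⊆ Set.Ioi (0:ℝ) ×ˢ Set.Ioo (-π) π := by
    rintro ⟨r, θ⟩ ⟨hr, hθ⟩
    exact ⟨by simp only [Set.mem_Ioi]; linarith [hr.1], hθ⟩
  have hstep2 : (∫ p in Set.Ioi (0:ℝ) ×ˢ Set.Ioo (-π) π, p.1 • gg ρ u p.1)
      = ∫ p in Set.Icc (1-ρ) (1+ρ) ×ˢ Set.Ioo (-π) π, p.1 • gg ρ u p.1 := by
    apply setIntegral_eq_of_subset_of_ae_diff_eq_zero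
      ((measurableSet_Ioi.prod measurableSet_Ioo).nullMeasurableSet) hsub
    filter_upwards with p
    rintro ⟨⟨hp1, hp2⟩, hp3⟩
    have hr : p.1 ∉ Set.Icc (1-ρ) (1+ρ) := by
      intro hmem; exact hp3 ⟨hmem, hp2⟩
    rw [Set.mem_Icc, not_and_or] at hr
    have : (1 - p.1)^2 > ρ^2 := by
      rcases hr with h | h
      · push_neg at h; nlinarith
      · push_neg at h; nlinarith
    rw [gg_zero ρ u p.1 this, smul_zero]
  rw [hstep2]
  have hintOn : IntegrableOn (fun p : ℝ×ℝ => p.1 • gg ρ u p.1)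
      (Set.Icc (1-ρ) (1+ρ) ×ˢ Set.Ioo (-π) π) volume := by
    have hco : Continuous (fun p : ℝ×ℝ => p.1 • gg ρ u p.1) :=
      continuous_fst.smul ((gg_cont ρ u).comp continuous_fst)
    have : IntegrableOn (fun p : ℝ×ℝ => p.1 • gg ρ u p.1)
        (Set.Icc (1-ρ) (1+ρ) ×ˢ Set.Icc (-π) π) volume :=
      hco.continuousOn.integrableOn_compact (isCompact_Icc.prod isCompact_Icc)
    exact this.mono_set (Set.prod_mono subset_rfl Set.Ioo_subset_Icc_self)
  rw [Measure.volume_eq_prod] at hintOn ⊢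
  rw [MeasureTheory.setIntegral_prod _ hintOn]
  apply setIntegral_congr_fun measurableSet_Icc
  intro r hr
  simp only
  rw [MeasureTheory.setIntegral_const, measureReal_def, Real.volume_Ioo,
    ENNReal.toReal_ofReal (by linarith [Real.pi_pos] : (0:ℝ) ≤ π - -π), smul_smul]
  congr 1
  ring

noncomputable def hh (ρ u : ℝ) (t : ℝ) : ℂ :=
  ∫ z in -(Real.sqrt (ρ^2 - t^2))..(Real.sqrt (ρ^2 - t^2)), Ee u z

lemma gg_shift (ρ u t : ℝ) : gg ρ u (1 + t) = hh ρ u t := by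
  unfold gg hh
  rw [show (1 - (1+t))^2 = t^2 by ring]

lemma hh_cont (ρ u : ℝ) : Continuous (hh ρ u) := by
  have : Continuous (fun t : ℝ => gg ρ u (1 + t)) :=
    (gg_cont ρ u).comp (by fun_prop)
  simpa only [funext (gg_shift ρ u)] using this

lemma hh_even (ρ u t : ℝ) : hh ρ u (-t) = hh ρ u t := by
  unfold hh
  rw [show (-t)^2 = t^2 by ring]

lemma step_M2 (ρ : ℝ) (hρ0 : 0 < ρ) (hρ1 : ρ < 1) (u : ℝ) :
    (∫ r in Set.Icc (1-ρ) (1+ρ), (2*π*r) • gg ρ u r)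
      = (2*π : ℝ) • ∫ t in (-ρ)..ρ, hh ρ u t := by
  rw [MeasureTheory.integral_Icc_eq_integral_Ioc,
    ← intervalIntegral.integral_of_le (by linarith : (1:ℝ)-ρ ≤ 1+ρ)]
  have hshift := intervalIntegral.integral_comp_add_left
    (fun r => (2*π*r) • gg ρ u r) 1 (a := -ρ) (b := ρ)
  rw [show (1:ℝ) + -ρ = 1 - ρ by ring] at hshift
  rw [← hshift]
  have heq : ∀ t : ℝ, (2*π*(1+t)) • gg ρ u (1+t)
      = (2*π : ℝ) • hh ρ u t + (2*π : ℝ) • (t • hh ρ u t) := by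
    intro t
    rw [gg_shift, smul_smul, ← add_smul]
    congr 1
    ring
  simp only [heq]
  have i1 : IntervalIntegrable (fun t => (2*π:ℝ) • hh ρ u t) volume (-ρ) ρ :=
    (Continuous.intervalIntegrable (by have := hh_cont ρ u; fun_prop) _ _)
  have i2 : IntervalIntegrable (fun t => (2*π:ℝ) • (t • hh ρ u t)) volume (-ρ) ρ :=
    (Continuous.intervalIntegrable
      (by have := hh_cont ρ u; fun_prop) _ _)
  rw [intervalIntegral.integral_add i1 i2]
  have hodd : (∫ t in (-ρ)..ρ, t • hh ρ u t) = 0 := by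
    have hneg := intervalIntegral.integral_comp_neg
      (fun t => t • hh ρ u t) (a := -ρ) (b := ρ)
    rw [neg_neg] at hneg
    have : (∫ t in (-ρ)..ρ, (-t) • hh ρ u (-t)) = - ∫ t in (-ρ)..ρ, t • hh ρ u t := by
      rw [← intervalIntegral.integral_neg]
      congr 1; ext t; rw [hh_even, neg_smul]
    rw [this] at hneg
    exact neg_eq_self.mp hneg
  rw [intervalIntegral.integral_smul, intervalIntegral.integral_smul, hodd, smul_zero, add_zero]

lemma lemM (ρ : ℝ) (hρ0 : 0 < ρ) (hρ1 : ρ < 1) (u : ℝ) :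
    (∫ x : ℝ×ℝ×ℝ, (Set.indicator (solidTorus1 ρ) (fun _ => (1 : ℂ)) x) * Ee u x.2.2)
      = (2*π : ℝ) • ∫ t in (-ρ)..ρ, hh ρ u t := by
  set F : ℝ×ℝ×ℝ → ℂ :=
    fun x => (Set.indicator (solidTorus1 ρ) (fun _ => (1 : ℂ)) x) * Ee u x.2.2 with hF
  have hFi : Integrable F volume := F_integrable ρ hρ0 hρ1 u
  have h1 : (∫ x : ℝ×ℝ×ℝ, F x)
      = ∫ q : (ℝ×ℝ)×ℝ, F (MeasurableEquiv.prodAssoc q) :=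
    ((volume_preserving_prodAssoc).integral_comp
      (MeasurableEquiv.measurableEmbedding _) F).symm
  have hFi2 : Integrable (fun q : (ℝ×ℝ)×ℝ => F (MeasurableEquiv.prodAssoc q)) volume :=
    ((volume_preserving_prodAssoc).integrable_comp_emb
      (MeasurableEquiv.measurableEmbedding _)).mpr hFi
  rw [h1]
  rw [Measure.volume_eq_prod] at hFi2 ⊢
  rw [MeasureTheory.integral_prod _ hFi2]
  have h2 : ∀ v : ℝ×ℝ, (∫ z : ℝ, F (MeasurableEquiv.prodAssoc (v, z)))
      = gg ρ u (Real.sqrt (v.1^2 + v.2^2)) := by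
    intro v
    have : ∀ z : ℝ, F (MeasurableEquiv.prodAssoc (v, z))
        = (Set.indicator (solidTorus1 ρ) (fun _ => (1 : ℂ)) (v.1, v.2, z)) * Ee u z := by
      intro z; rfl
    simp only [this]
    exact inner_integral ρ u v.1 v.2
  simp only [h2]
  rw [polar_step ρ hρ0 hρ1 u]
  exact step_M2 ρ hρ0 hρ1 u

lemma Ee_zero (z : ℝ) : Ee 0 z = 1 := by
  unfold Ee; norm_num

lemma int_Ee (u : ℝ) (hu : u ≠ 0) (σ : ℝ) :
    (∫ z in (-σ)..σ, Ee u z) = ((Real.sin (2*π*u*σ) / (π*u) : ℝ) : ℂ) := by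
  set c : ℂ := -((2*π*u : ℝ) : ℂ) * Complex.I with hc
  have hπ : (π : ℝ) ≠ 0 := Real.pi_ne_zero
  have hcne : c ≠ 0 := by
    apply mul_ne_zero _ Complex.I_ne_zero
    rw [neg_ne_zero, Ne, Complex.ofReal_eq_zero]
    positivity
  have hE : ∀ z : ℝ, Ee u z = Complex.exp (c * z) := by
    intro z; unfold Ee; congr 1; push_cast [hc]; ring
  simp_rw [hE]
  rw [integral_exp_mul_complex hcne]
  have e1 : c * (σ:ℂ) = ((-(2*π*u*σ) : ℝ):ℂ) * Complex.I := by push_cast [hc]; ring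
  have e2 : c * ((-σ:ℝ):ℂ) = (((2*π*u*σ) : ℝ):ℂ) * Complex.I := by push_cast [hc]; ring
  rw [e1, e2, Complex.exp_mul_I, Complex.exp_mul_I, div_eq_iff hcne]
  have hπc : ((π:ℝ):ℂ) ≠ 0 := Complex.ofReal_ne_zero.mpr hπ
  have huc : ((u:ℝ):ℂ) ≠ 0 := Complex.ofReal_ne_zero.mpr hu
  rw [← Complex.ofReal_cos, ← Complex.ofReal_sin, ← Complex.ofReal_cos, ← Complex.ofReal_sin]
  push_cast [Real.cos_neg, Real.sin_neg, hc]
  field_simp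
  ring

lemma hh_eval (ρ u : ℝ) (hu : u ≠ 0) (t : ℝ) :
    hh ρ u t = ((Real.sin (2*π*u*Real.sqrt (ρ^2-t^2)) / (π*u) : ℝ) : ℂ) := by
  unfold hh; exact int_Ee u hu _

lemma hh_eval0 (ρ : ℝ) (t : ℝ) :
    hh ρ 0 t = ((2 * Real.sqrt (ρ^2-t^2) : ℝ) : ℂ) := by
  unfold hh
  simp_rw [Ee_zero]
  rw [intervalIntegral.integral_const]
  rw [sub_neg_eq_add, Complex.real_smul]
  push_cast
  ring

lemma int0 (ρ : ℝ) (hρ0 : 0 < ρ) :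
    (∫ t in (-ρ)..ρ, 2 * Real.sqrt (ρ^2 - t^2)) = π * ρ^2 := by
  have hsub := intervalIntegral.integral_comp_smul_deriv
    (a := (-1:ℝ)) (b := 1) (f := fun x => ρ * x) (f' := fun _ => ρ)
    (g := fun t => 2 * Real.sqrt (ρ^2 - t^2))
    (fun x _ => by simpa using (hasDerivAt_id x).const_mul ρ) continuousOn_const (by fun_prop)
  simp only [Function.comp] at hsub
  rw [show ρ * (-1:ℝ) = -ρ by ring, show ρ * (1:ℝ) = ρ by ring] at hsub
  rw [← hsub]
  have heq : ∀ x : ℝ, ρ • (2 * Real.sqrt (ρ^2 - (ρ*x)^2)) = 2*ρ^2 * Real.sqrt (1 - x^2) := by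
    intro x
    have : ρ^2 - (ρ*x)^2 = ρ^2 * (1 - x^2) := by ring
    rw [smul_eq_mul, this, Real.sqrt_mul (sq_nonneg ρ), Real.sqrt_sq hρ0.le]
    ring
  simp only [heq]
  rw [intervalIntegral.integral_const_mul, integral_sqrt_one_sub_sq]
  ring

lemma intu (ρ u : ℝ) (hρ0 : 0 < ρ) :
    (∫ t in (-ρ)..ρ, Real.sin (2*π*u*Real.sqrt (ρ^2 - t^2)))
      = ∫ θ in (0:ℝ)..π, (ρ * Real.sin θ) * Real.sin (2*π*u*(ρ * Real.sin θ)) := by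
  have hd : ∀ θ ∈ Set.uIcc (0:ℝ) π,
      HasDerivAt (fun θ => -ρ * Real.cos θ) (ρ * Real.sin θ) θ := by
    intro θ _
    have := (Real.hasDerivAt_cos θ).const_mul (-ρ)
    exact this.congr_deriv (by ring)
  have hsub := intervalIntegral.integral_comp_smul_deriv
    (a := (0:ℝ)) (b := π) (f := fun θ => -ρ * Real.cos θ) (f' := fun θ => ρ * Real.sin θ)
    (g := fun t => Real.sin (2*π*u*Real.sqrt (ρ^2 - t^2)))
    hd (by fun_prop) (by fun_prop)
  simp only [Function.comp] at hsub
  rw [show -ρ * Real.cos 0 = -ρ by simp, show -ρ * Real.cos π = ρ by simp] at hsub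
  rw [← hsub]
  apply intervalIntegral.integral_congr
  intro θ hθ
  rw [Set.uIcc_of_le Real.pi_pos.le] at hθ
  have hsin : 0 ≤ Real.sin θ := Real.sin_nonneg_of_nonneg_of_le_pi hθ.1 hθ.2
  have : ρ^2 - (-ρ * Real.cos θ)^2 = (ρ * Real.sin θ)^2 := by
    have := Real.sin_sq_add_cos_sq θ; nlinarith
  simp only [smul_eq_mul, this]
  rw [Real.sqrt_sq (mul_nonneg hρ0.le hsin)]

theorem stmt_11 (ρ : ℝ) (hρ0 : 0 < ρ) (hρ1 : ρ < 1) (u : ℝ) :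
    ftorus ρ ((0, 0, u) : ℝ × ℝ × ℝ)
      = ((2 * π * ρ ^ 2 * ∫ θ in (0 : ℝ)..(2 * π),
          Real.sin θ ^ 2 * Real.cos (2 * π * ρ * u * Real.cos θ) : ℝ) : ℂ) ∧
    (u ≠ 0 →
      ftorus ρ ((0, 0, u) : ℝ × ℝ × ℝ) = ((2 * π * ρ / u * J1 (2 * π * ρ * u) : ℝ) : ℂ)) := by
  have hπ : (0:ℝ) < π := Real.pi_pos
  have hmain : ftorus ρ ((0, 0, u) : ℝ × ℝ × ℝ)
      = (2*π : ℝ) • ∫ t in (-ρ)..ρ, hh ρ u t := by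
    rw [← lemM ρ hρ0 hρ1 u]
    unfold ftorus Ee
    simp only [mul_zero, zero_add]
  by_cases hu : u = 0
  · subst hu
    constructor
    · have h1 : (∫ t in (-ρ)..ρ, hh ρ 0 t)
          = ((π * ρ^2 : ℝ) : ℂ) := by
        simp_rw [hh_eval0]
        rw [intervalIntegral.integral_ofReal, int0 ρ hρ0]
      rw [hmain, h1]
      have h2 : (∫ θ in (0:ℝ)..(2*π), Real.sin θ ^ 2 * Real.cos (2*π*ρ*0 * Real.cos θ)) = π := by
        simp only [mul_zero, zero_mul, Real.cos_zero, mul_one]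
        rw [integral_sin_sq]
        simp [Real.sin_two_pi, Real.cos_two_pi]
      rw [h2, Complex.real_smul, ← Complex.ofReal_mul]
      norm_num
      ring_nf
    · intro h; exact absurd rfl h
  · set I := ∫ θ in (0:ℝ)..π, Real.sin θ * Real.sin (2*π*ρ*u * Real.sin θ) with hI
    have hval : ftorus ρ ((0, 0, u) : ℝ × ℝ × ℝ) = ((2*ρ/u * I : ℝ) : ℂ) := by
      rw [hmain]
      simp_rw [hh_eval ρ u hu]
      rw [intervalIntegral.integral_ofReal]
      have hd : (∫ t in (-ρ)..ρ, Real.sin (2*π*u*Real.sqrt (ρ^2 - t^2)) / (π*u))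
          = (1/(π*u)) * ∫ t in (-ρ)..ρ, Real.sin (2*π*u*Real.sqrt (ρ^2 - t^2)) := by
        rw [← intervalIntegral.integral_const_mul]
        congr 1; ext t; ring
      rw [hd, intu ρ u hρ0]
      have he : (fun θ => (ρ * Real.sin θ) * Real.sin (2*π*u*(ρ * Real.sin θ)))
          = fun θ => ρ * (Real.sin θ * Real.sin (2*π*ρ*u * Real.sin θ)) := by
        ext θ
        rw [show 2*π*u*(ρ * Real.sin θ) = 2*π*ρ*u * Real.sin θ by ring]
        ring
      rw [he, intervalIntegral.integral_const_mul, ← hI,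
        Complex.real_smul, ← Complex.ofReal_mul]
      congr 1
      field_simp
    have hL2 := L2 (2*π*ρ*u)
    constructor
    · rw [hval]
      congr 1
      field_simp at hL2 ⊢
      linear_combination (-1 : ℝ) * hL2
    · intro _
      rw [hval]
      congr 1
      unfold J1
      rw [L3, ← hI]
      field_simp
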